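/- Fix β > 0 and L ≥ 1. For each N let K = ⌊βN⌋, let π_1,…,π_K be i.i.d. uniform on {1,…,N} with occupancy counts ν_i = #{k ≤ K : π_k = i}, and set m_L(N) = (1/N)·Σ_{i=1}^N ν_i^L (the L-th empirical spectral moment of SSᵀ for a TH matrix with N_s = 1). Then m_L(N) converges in probability, as N → ∞, to the L-th moment of a Poisson distribution with mean β, namely m̄_L = Σ_{ℓ=1}^{L} S(L,ℓ) β^ℓ; that is, for every ε > 0, P(|m_L(N) − m̄_L| > ε) → 0. -/

import Mathlib

/-- Stirling numbers of the second kind. -/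
def stirling2 : ℕ → ℕ → ℕ
  | 0, 0 => 1
  | 0, _ + 1 => 0
  | _ + 1, 0 => 0
  | n + 1, k + 1 => (k + 1) * stirling2 n (k + 1) + stirling2 n k

/-- Occupancy count: the number of draws `k` (out of `K`) with `π k = i`; the `i`-th
diagonal entry (eigenvalue) of the Gram matrix `SSᵀ` of a TH matrix with `N_s = 1`. -/
def occupancy {N K : ℕ} (π : Fin K → Fin N) (i : Fin N) : ℕ :=
  (Finset.univ.filter fun k => π k = i).card

/-- The `L`-th empirical spectral moment `m_L = (1/N)·Σ_{i=1}^N ν_i^L`. -/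
noncomputable def empMoment {N K : ℕ} (L : ℕ) (π : Fin K → Fin N) : ℝ :=
  (1 / (N : ℝ)) * ∑ i : Fin N, (occupancy π i : ℝ) ^ L



open Finset

lemma stirling2_eq_zero : ∀ {n k : ℕ}, n < k → stirling2 n k = 0 := by
  intro n
  induction n with
  | zero => intro k h; cases k with
    | zero => omega
    | succ k => rfl
  | succ n ih =>
    intro k h
    cases k with
    | zero => omega
    | succ k =>
      show (k + 1) * stirling2 n (k + 1) + stirling2 n k = 0
      rw [ih (by omega), ih (by omega)]
      ring

lemma mul_descFactorial (n ℓ : ℕ) :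
    n * n.descFactorial ℓ = n.descFactorial (ℓ + 1) + ℓ * n.descFactorial ℓ := by
  rcases le_or_gt ℓ n with h | h
  · rw [Nat.descFactorial_succ]
    have : n = (n - ℓ) + ℓ := by omega
    nlinarith [this]
  · rw [Nat.descFactorial_eq_zero_iff_lt.mpr h,
      Nat.descFactorial_eq_zero_iff_lt.mpr (by omega : n < ℓ + 1)]
    ring

lemma pow_eq_sum_stirling (L n : ℕ) :
    n ^ L = ∑ ℓ ∈ Finset.range (L + 1), stirling2 L ℓ * n.descFactorial ℓ := by
  induction L with
  | zero => simp [stirling2]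
  | succ L ih =>
    have h1 : n ^ (L + 1) = ∑ ℓ ∈ Finset.range (L + 1),
        stirling2 L ℓ * (n.descFactorial (ℓ + 1) + ℓ * n.descFactorial ℓ) := by
      rw [pow_succ, ih, Finset.sum_mul]
      refine Finset.sum_congr rfl fun ℓ _ => ?_
      rw [mul_assoc, mul_comm (n.descFactorial ℓ) n, mul_descFactorial]
    rw [h1]
    rw [Finset.sum_range_succ' (fun m => stirling2 (L+1) m * n.descFactorial m) (L+1)]
    have hz : stirling2 (L + 1) 0 * n.descFactorial 0 = 0 := by
      show (0 : ℕ) * _ = 0; ring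
    rw [hz, add_zero]
    have : ∀ m ∈ Finset.range (L + 1),
        stirling2 (L + 1) (m + 1) * n.descFactorial (m + 1)
          = (m+1) * stirling2 L (m+1) * n.descFactorial (m+1) + stirling2 L m * n.descFactorial (m+1) := by
      intro m _
      show ((m + 1) * stirling2 L (m + 1) + stirling2 L m) * _ = _
      ring
    rw [Finset.sum_congr rfl this, Finset.sum_add_distrib]
    have h2 : ∑ ℓ ∈ Finset.range (L + 1), stirling2 L ℓ * (n.descFactorial (ℓ + 1) + ℓ * n.descFactorial ℓ)
        = ∑ ℓ ∈ Finset.range (L + 1), ℓ * stirling2 L ℓ * n.descFactorial ℓ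
          + ∑ ℓ ∈ Finset.range (L + 1), stirling2 L ℓ * n.descFactorial (ℓ + 1) := by
      rw [← Finset.sum_add_distrib]
      refine Finset.sum_congr rfl fun ℓ _ => ?_; ring
    rw [h2]
    congr 1
    · rw [Finset.sum_range_succ' (fun ℓ => ℓ * stirling2 L ℓ * n.descFactorial ℓ) L,
        Finset.sum_range_succ (fun m => (m+1) * stirling2 L (m+1) * n.descFactorial (m+1)) L,
        stirling2_eq_zero (by omega : L < L + 1)]
      simp



lemma occupancy_eq_sum {N K : ℕ} (π : Fin K → Fin N) (i : Fin N) :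
    occupancy π i = ∑ k : Fin K, if π k = i then 1 else 0 := by
  rw [occupancy, Finset.card_filter]

lemma occupancy_cons {N K : ℕ} (x : Fin N) (f : Fin K → Fin N) (i : Fin N) :
    occupancy (Fin.cons x f) i = occupancy f i + if x = i then 1 else 0 := by
  simp only [occupancy_eq_sum, Fin.sum_univ_succ, Fin.cons_zero, Fin.cons_succ]
  ring

lemma descFactorial_succ_left_real (n c : ℕ) :
    (((n + 1).descFactorial c : ℕ) : ℝ)
      = n.descFactorial c + c * n.descFactorial (c - 1) := by
  cases c with
  | zero => simp
  | succ k =>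
    rw [Nat.succ_descFactorial_succ, Nat.descFactorial_succ]
    rcases le_or_gt k n with h | h
    · have hnk : ((n - k : ℕ) : ℝ) = (n : ℝ) - k := by
        push_cast [h]; ring
      push_cast
      rw [hnk]
      ring
    · have h0 : n.descFactorial k = 0 := Nat.descFactorial_eq_zero_iff_lt.mpr h
      simp [h0]

lemma sum_pi_cons {N K : ℕ} (F : (Fin (K + 1) → Fin N) → ℝ) :
    ∑ π : Fin (K + 1) → Fin N, F π
      = ∑ f : Fin K → Fin N, ∑ x : Fin N, F (Fin.cons x f) := by
  rw [← (Fin.consEquiv fun _ : Fin (K + 1) => Fin N).sum_comp F]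
  rw [Fintype.sum_prod_type, Finset.sum_comm]
  rfl

lemma sum_descFactorial_pair {N : ℕ} (i j : Fin N) (hij : i ≠ j) :
    ∀ (K : ℕ) (a b : ℕ),
      ∑ π : Fin K → Fin N, ((occupancy π i).descFactorial a : ℝ)
          * ((occupancy π j).descFactorial b : ℝ)
        = (K.descFactorial (a + b) : ℝ) * (N : ℝ) ^ K / (N : ℝ) ^ (a + b) := by
  have hN : (0 : ℝ) < N := by exact_mod_cast i.pos
  intro K
  induction K with
  | zero =>
    intro a b
    have h0 : ∀ π : Fin 0 → Fin N, occupancy π i = 0 ∧ occupancy π j = 0 := by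
      intro π; constructor <;> simp [occupancy]
    rcases Nat.eq_zero_or_pos (a + b) with hab | hab
    · obtain ⟨rfl, rfl⟩ : a = 0 ∧ b = 0 := by omega
      simp [occupancy]
    · have : ∀ π : Fin 0 → Fin N, ((occupancy π i).descFactorial a : ℝ)
          * ((occupancy π j).descFactorial b : ℝ) = 0 := by
        intro π
        obtain ⟨h1, h2⟩ := h0 π
        rcases Nat.eq_zero_or_pos a with rfl | ha
        · have hb : 0 < b := by omega
          rw [h2, Nat.descFactorial_eq_zero_iff_lt.mpr hb]
          simp
        · rw [h1, Nat.descFactorial_eq_zero_iff_lt.mpr ha]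
          simp
      rw [Finset.sum_congr rfl fun π _ => this π, Finset.sum_const,
        Nat.descFactorial_eq_zero_iff_lt.mpr (by omega : 0 < a + b)]
      simp
  | succ K ih =>
    intro a b
    rw [sum_pi_cons]
    have key : ∀ (f : Fin K → Fin N) (x : Fin N),
        ((occupancy (Fin.cons x f) i).descFactorial a : ℝ)
            * ((occupancy (Fin.cons x f) j).descFactorial b : ℝ)
          = ((occupancy f i).descFactorial a : ℝ) * ((occupancy f j).descFactorial b : ℝ)
            + (if x = i then (a : ℝ) * ((occupancy f i).descFactorial (a - 1) : ℝ)
                * ((occupancy f j).descFactorial b : ℝ) else 0)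
            + (if x = j then (b : ℝ) * ((occupancy f i).descFactorial a : ℝ)
                * ((occupancy f j).descFactorial (b - 1) : ℝ) else 0) := by
      intro f x
      rcases eq_or_ne x i with rfl | hxi
      · rw [occupancy_cons, occupancy_cons, if_pos rfl, if_pos rfl, if_neg hij, if_neg hij,
          add_zero, descFactorial_succ_left_real]
        ring
      · rcases eq_or_ne x j with rfl | hxj
        · rw [occupancy_cons, occupancy_cons, if_neg hxi, if_neg hxi, if_pos rfl, if_pos rfl,
            add_zero, descFactorial_succ_left_real]
          ring
        · rw [occupancy_cons, occupancy_cons, if_neg hxi, if_neg hxi, if_neg hxj, if_neg hxj,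
            add_zero, add_zero]
          ring
    have step : ∀ f : Fin K → Fin N,
        ∑ x : Fin N, ((occupancy (Fin.cons x f) i).descFactorial a : ℝ)
            * ((occupancy (Fin.cons x f) j).descFactorial b : ℝ)
          = (N : ℝ) * (((occupancy f i).descFactorial a : ℝ) * ((occupancy f j).descFactorial b : ℝ))
            + (a : ℝ) * (((occupancy f i).descFactorial (a - 1) : ℝ) * ((occupancy f j).descFactorial b : ℝ))
            + (b : ℝ) * (((occupancy f i).descFactorial a : ℝ) * ((occupancy f j).descFactorial (b - 1) : ℝ)) := by
      intro f
      rw [Finset.sum_congr rfl fun x _ => key f x]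
      rw [Finset.sum_add_distrib, Finset.sum_add_distrib, Finset.sum_const,
        Finset.sum_ite_eq' Finset.univ i, Finset.sum_ite_eq' Finset.univ j]
      simp [mul_assoc, mul_comm]
      ring
    rw [Finset.sum_congr rfl fun f _ => step f]
    rw [Finset.sum_add_distrib, Finset.sum_add_distrib, ← Finset.mul_sum, ← Finset.mul_sum,
      ← Finset.mul_sum, ih a b, ih (a - 1) b, ih a (b - 1)]
    rcases a with _ | s
    · rcases b with _ | t
      · simp only [Nat.add_zero, Nat.zero_sub, Nat.descFactorial_zero, Nat.cast_zero,
          Nat.cast_one, zero_mul, add_zero, pow_zero]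
        rw [pow_succ]
        ring
      · have hd := descFactorial_succ_left_real K (t + 1)
        simp only [Nat.zero_add, Nat.cast_zero, zero_mul, zero_add, Nat.add_sub_cancel] at *
        rw [hd]
        field_simp
        ring
    · rcases b with _ | t
      · have hd := descFactorial_succ_left_real K (s + 1)
        simp only [Nat.add_zero, Nat.cast_zero, zero_mul, add_zero, Nat.add_sub_cancel] at *
        rw [hd]
        field_simp
        ring
      · have hd := descFactorial_succ_left_real K (s + 1 + (t + 1))
        have e1 : s + 1 - 1 + (t + 1) = s + 1 + (t + 1) - 1 := by omega
        have e2 : s + 1 + (t + 1 - 1) = s + 1 + (t + 1) - 1 := by omega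
        rw [e1, e2, hd]
        have e3 : s + 1 + (t + 1) - 1 = s + t + 1 := by omega
        have e4 : s + 1 + (t + 1) = s + t + 2 := by omega
        rw [e3, e4]
        field_simp
        push_cast
        ring

lemma descFactorial_add_le (K a b : ℕ) :
    K.descFactorial (a + b) ≤ K.descFactorial a * K.descFactorial b := by
  induction b with
  | zero => simp
  | succ b ih =>
    rw [show a + (b + 1) = (a + b) + 1 from rfl, Nat.descFactorial_succ,
      Nat.descFactorial_succ, mul_comm (K - b), ← mul_assoc, mul_comm (K.descFactorial a)]
    exact Nat.mul_le_mul (Nat.le_trans (Nat.sub_le_sub_left (Nat.le_add_left b a) K)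
      (le_refl _)) ih |>.trans (by ring_nf; exact le_refl _)

lemma sum_pow_pair {N K : ℕ} (i j : Fin N) (hij : i ≠ j) (L : ℕ) :
    ∑ π : Fin K → Fin N, (occupancy π i : ℝ) ^ L * (occupancy π j : ℝ) ^ L
      = (∑ a ∈ Finset.range (L + 1), ∑ b ∈ Finset.range (L + 1),
          (stirling2 L a : ℝ) * (stirling2 L b : ℝ)
            * (K.descFactorial (a + b) : ℝ) / (N : ℝ) ^ (a + b)) * (N : ℝ) ^ K := by
  have hcast : ∀ n : ℕ, ((n : ℝ)) ^ L
      = ∑ ℓ ∈ Finset.range (L + 1), (stirling2 L ℓ : ℝ) * (n.descFactorial ℓ : ℝ) := by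
    intro n; exact_mod_cast congrArg (Nat.cast : ℕ → ℝ) (pow_eq_sum_stirling L n)
  have h1 : ∀ π : Fin K → Fin N, (occupancy π i : ℝ) ^ L * (occupancy π j : ℝ) ^ L
      = ∑ a ∈ Finset.range (L + 1), ∑ b ∈ Finset.range (L + 1),
          (stirling2 L a : ℝ) * (stirling2 L b : ℝ)
            * (((occupancy π i).descFactorial a : ℝ) * ((occupancy π j).descFactorial b : ℝ)) := by
    intro π
    rw [hcast, hcast, Finset.sum_mul_sum]
    exact Finset.sum_congr rfl fun a _ => Finset.sum_congr rfl fun b _ => by ring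
  rw [Finset.sum_congr rfl fun π _ => h1 π, Finset.sum_comm]
  rw [Finset.sum_mul]
  refine Finset.sum_congr rfl fun a _ => ?_
  rw [Finset.sum_comm, Finset.sum_mul]
  refine Finset.sum_congr rfl fun b _ => ?_
  rw [← Finset.mul_sum, sum_descFactorial_pair i j hij K a b]
  field_simp

lemma sum_pow_single {N K : ℕ} (hN : 2 ≤ N) (i : Fin N) (L : ℕ) :
    ∑ π : Fin K → Fin N, (occupancy π i : ℝ) ^ L
      = (∑ ℓ ∈ Finset.range (L + 1),
          (stirling2 L ℓ : ℝ) * (K.descFactorial ℓ : ℝ) / (N : ℝ) ^ ℓ) * (N : ℝ) ^ K := by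
  obtain ⟨j, hj⟩ := Fintype.exists_ne_of_one_lt_card (by simpa using by omega : 1 < Fintype.card (Fin N)) i
  have hcast : ∀ n : ℕ, ((n : ℝ)) ^ L
      = ∑ ℓ ∈ Finset.range (L + 1), (stirling2 L ℓ : ℝ) * (n.descFactorial ℓ : ℝ) := by
    intro n; exact_mod_cast congrArg (Nat.cast : ℕ → ℝ) (pow_eq_sum_stirling L n)
  rw [Finset.sum_congr rfl fun π _ => hcast (occupancy π i), Finset.sum_comm, Finset.sum_mul]
  refine Finset.sum_congr rfl fun ℓ _ => ?_
  have hp := sum_descFactorial_pair i j (Ne.symm hj) K ℓ 0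
  simp only [Nat.descFactorial_zero, Nat.cast_one, mul_one, Nat.add_zero] at hp
  rw [← Finset.mul_sum, hp]
  field_simp


lemma sum_sq_dev_bound (L : ℕ) {N K : ℕ} (hN : 2 ≤ N) (β : ℝ) (hβ : 0 < β)
    (hK : (K : ℝ) ≤ β * N) (mbar : ℝ) :
    ∑ π : Fin K → Fin N, (empMoment L π - mbar) ^ 2
      ≤ (N : ℝ) ^ K * ((∑ c ∈ Finset.range (2 * L + 1), (stirling2 (2 * L) c : ℝ) * β ^ c) / N
          + ((∑ ℓ ∈ Finset.range (L + 1),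
              (stirling2 L ℓ : ℝ) * (K.descFactorial ℓ : ℝ) / (N : ℝ) ^ ℓ) - mbar) ^ 2) := by
  have hNpos : (0 : ℝ) < N := by exact_mod_cast Nat.lt_of_lt_of_le Nat.zero_lt_two hN
  set E1 : ℝ := ∑ ℓ ∈ Finset.range (L + 1),
      (stirling2 L ℓ : ℝ) * (K.descFactorial ℓ : ℝ) / (N : ℝ) ^ ℓ with hE1def
  set E2 : ℝ := ∑ c ∈ Finset.range (2 * L + 1),
      (stirling2 (2 * L) c : ℝ) * (K.descFactorial c : ℝ) / (N : ℝ) ^ c with hE2def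
  set E11 : ℝ := ∑ a ∈ Finset.range (L + 1), ∑ b ∈ Finset.range (L + 1),
      (stirling2 L a : ℝ) * (stirling2 L b : ℝ)
        * (K.descFactorial (a + b) : ℝ) / (N : ℝ) ^ (a + b) with hE11def
  set C : ℝ := ∑ c ∈ Finset.range (2 * L + 1), (stirling2 (2 * L) c : ℝ) * β ^ c with hCdef
  -- sum of empirical moments
  have hmsum : ∑ π : Fin K → Fin N, empMoment L π = E1 * (N : ℝ) ^ K := by
    simp only [empMoment]
    rw [← Finset.mul_sum, Finset.sum_comm,
      Finset.sum_congr rfl fun i _ => sum_pow_single hN i L, Finset.sum_const,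
      Finset.card_univ, Fintype.card_fin, nsmul_eq_mul]
    field_simp
    rfl
  -- sum of squared empirical moments
  have hdiag : ∀ x : ℝ, x ^ L * x ^ L = x ^ (2 * L) := by
    intro x; rw [← pow_add, two_mul]
  have hinner : ∀ i j : Fin N,
      ∑ π : Fin K → Fin N, (occupancy π i : ℝ) ^ L * (occupancy π j : ℝ) ^ L
        = E11 * (N : ℝ) ^ K
          + (if j = i then E2 * (N : ℝ) ^ K - E11 * (N : ℝ) ^ K else 0) := by
    intro i j
    rcases eq_or_ne j i with rfl | hij
    · rw [if_pos rfl,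
        Finset.sum_congr rfl fun π _ => hdiag ((occupancy π j : ℝ)),
        sum_pow_single hN j (2 * L)]
      ring
    · rw [if_neg hij, add_zero, sum_pow_pair i j (Ne.symm hij) L]
  have hmsq : ∑ π : Fin K → Fin N, (empMoment L π) ^ 2
      = (1 / (N : ℝ) ^ 2) * ((N : ℝ) * ((N : ℝ) * (E11 * (N : ℝ) ^ K)
          + (E2 * (N : ℝ) ^ K - E11 * (N : ℝ) ^ K))) := by
    have hsq : ∀ π : Fin K → Fin N, (empMoment L π) ^ 2
        = (1 / (N : ℝ) ^ 2) * ∑ i : Fin N, ∑ j : Fin N,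
            (occupancy π i : ℝ) ^ L * (occupancy π j : ℝ) ^ L := by
      intro π
      rw [empMoment, mul_pow, sq (∑ i : Fin N, (occupancy π i : ℝ) ^ L),
        Finset.sum_mul_sum, div_pow, one_pow]
    rw [Finset.sum_congr rfl fun π _ => hsq π, ← Finset.mul_sum]
    congr 1
    rw [Finset.sum_comm]
    have h1 : ∀ i : Fin N, ∑ π : Fin K → Fin N, ∑ j : Fin N,
        (occupancy π i : ℝ) ^ L * (occupancy π j : ℝ) ^ L
        = (N : ℝ) * (E11 * (N : ℝ) ^ K) + (E2 * (N : ℝ) ^ K - E11 * (N : ℝ) ^ K) := by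
      intro i
      rw [Finset.sum_comm, Finset.sum_congr rfl fun j _ => hinner i j,
        Finset.sum_add_distrib, Finset.sum_const, Finset.card_univ, Fintype.card_fin,
        nsmul_eq_mul, Finset.sum_ite_eq' Finset.univ i
          (fun _ => E2 * (N : ℝ) ^ K - E11 * (N : ℝ) ^ K)]
      simp
    rw [Finset.sum_congr rfl fun i _ => h1 i, Finset.sum_const, Finset.card_univ,
      Fintype.card_fin, nsmul_eq_mul]
  -- expansion of the squared deviation
  have hdev : ∑ π : Fin K → Fin N, (empMoment L π - mbar) ^ 2
      = ∑ π : Fin K → Fin N, (empMoment L π) ^ 2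
        - 2 * mbar * ∑ π : Fin K → Fin N, empMoment L π + (N : ℝ) ^ K * mbar ^ 2 := by
    have : ∀ π : Fin K → Fin N, (empMoment L π - mbar) ^ 2
        = (empMoment L π) ^ 2 - 2 * mbar * empMoment L π + mbar ^ 2 := fun π => by ring
    rw [Finset.sum_congr rfl fun π _ => this π, Finset.sum_add_distrib,
      Finset.sum_sub_distrib, ← Finset.mul_sum, Finset.sum_const, Finset.card_univ,
      nsmul_eq_mul]
    congr 2
    rw [Fintype.card_fun, Fintype.card_fin, Fintype.card_fin]
    push_cast
    ring
  -- bounds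
  have hE11nn : 0 ≤ E11 := by
    rw [hE11def]
    refine Finset.sum_nonneg fun a _ => Finset.sum_nonneg fun b _ => by positivity
  have hE11le : E11 ≤ E1 * E1 := by
    rw [hE11def, hE1def, Finset.sum_mul_sum]
    refine Finset.sum_le_sum fun a _ => Finset.sum_le_sum fun b _ => ?_
    have hcast : (K.descFactorial (a + b) : ℝ)
        ≤ (K.descFactorial a : ℝ) * (K.descFactorial b : ℝ) := by
      exact_mod_cast descFactorial_add_le K a b
    rw [div_mul_div_comm, ← pow_add]
    refine div_le_div_of_nonneg_right ?_ (by positivity)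
    nlinarith [hcast, mul_le_mul_of_nonneg_left hcast
      (by positivity : (0 : ℝ) ≤ (stirling2 L a : ℝ) * (stirling2 L b : ℝ))]
  have hE2le : E2 ≤ C := by
    rw [hE2def, hCdef]
    refine Finset.sum_le_sum fun c _ => ?_
    rw [mul_div_assoc]
    refine mul_le_mul_of_nonneg_left ?_ (by positivity)
    have h1 : (K.descFactorial c : ℝ) ≤ (K : ℝ) ^ c := by
      exact_mod_cast Nat.descFactorial_le_pow K c
    have h2 : (K.descFactorial c : ℝ) / (N : ℝ) ^ c ≤ ((K : ℝ) / N) ^ c := by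
      rw [div_pow]
      gcongr
    refine h2.trans ?_
    refine pow_le_pow_left₀ (by positivity) ?_ c
    rw [div_le_iff₀ hNpos]
    exact hK
  -- final algebra
  rw [hdev, hmsq, hmsum]
  have hE2nn : 0 ≤ E2 := by
    rw [hE2def]
    exact Finset.sum_nonneg fun c _ => by positivity
  have hN1 : (1 : ℝ) ≤ (N : ℝ) := by exact_mod_cast Nat.one_le_of_lt (Nat.lt_of_lt_of_le Nat.one_lt_two hN)
  have hNKnn : (0 : ℝ) ≤ (N : ℝ) ^ K := by positivity
  have hdivE11 : 0 ≤ E11 / N := div_nonneg hE11nn hNpos.le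
  have hdivE2 : E2 / N ≤ C / N := by gcongr
  have key : (1 / (N : ℝ) ^ 2) * ((N : ℝ) * ((N : ℝ) * E11 + (E2 - E11)))
      ≤ C / N + E1 * E1 := by
    have hLHS : (1 / (N : ℝ) ^ 2) * ((N : ℝ) * ((N : ℝ) * E11 + (E2 - E11)))
        = E11 - E11 / N + E2 / N := by
      field_simp
      ring
    rw [hLHS]
    linarith
  have hfact : 1 / (N : ℝ) ^ 2 * ((N : ℝ) * ((N : ℝ) * (E11 * (N : ℝ) ^ K)
        + (E2 * (N : ℝ) ^ K - E11 * (N : ℝ) ^ K)))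
      - 2 * mbar * (E1 * (N : ℝ) ^ K) + (N : ℝ) ^ K * mbar ^ 2
      = (N : ℝ) ^ K * (1 / (N : ℝ) ^ 2 * ((N : ℝ) * ((N : ℝ) * E11 + (E2 - E11)))
          - 2 * mbar * E1 + mbar ^ 2) := by ring
  rw [hfact]
  refine mul_le_mul_of_nonneg_left ?_ hNKnn
  have hexp : C / (N : ℝ) + (E1 - mbar) ^ 2
      = C / N + E1 * E1 - 2 * mbar * E1 + mbar ^ 2 := by ring
  rw [hexp]
  linarith

lemma cheb_count {N K : ℕ} (L : ℕ) (ε mbar : ℝ) (hε : 0 < ε) :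
    ((Nat.card {π : Fin K → Fin N // ε < |empMoment L π - mbar|} : ℕ) : ℝ) * ε ^ 2
      ≤ ∑ π : Fin K → Fin N, (empMoment L π - mbar) ^ 2 := by
  classical
  rw [Nat.card_eq_fintype_card, Fintype.card_subtype]
  have h1 : ∀ π ∈ Finset.univ.filter fun π : Fin K → Fin N => ε < |empMoment L π - mbar|,
      ε ^ 2 ≤ (empMoment L π - mbar) ^ 2 := by
    intro π hπ
    have h := (Finset.mem_filter.mp hπ).2
    calc ε ^ 2 ≤ |empMoment L π - mbar| ^ 2 := by
          exact pow_le_pow_left₀ hε.le h.le 2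
      _ = (empMoment L π - mbar) ^ 2 := sq_abs _
  calc ((Finset.univ.filter fun π : Fin K → Fin N =>
        ε < |empMoment L π - mbar|).card : ℝ) * ε ^ 2
      = (Finset.univ.filter fun π : Fin K → Fin N =>
          ε < |empMoment L π - mbar|).card • ε ^ 2 := by rw [nsmul_eq_mul]
    _ ≤ ∑ π ∈ Finset.univ.filter fun π : Fin K → Fin N => ε < |empMoment L π - mbar|,
          (empMoment L π - mbar) ^ 2 := Finset.card_nsmul_le_sum _ _ _ h1
    _ ≤ ∑ π : Fin K → Fin N, (empMoment L π - mbar) ^ 2 :=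
        Finset.sum_le_sum_of_subset_of_nonneg (Finset.filter_subset _ _)
          (fun π _ _ => sq_nonneg _)

lemma tendsto_floor_mul_div (β : ℝ) (hβ : 0 < β) :
    Filter.Tendsto (fun N : ℕ => ((⌊β * (N : ℝ)⌋₊ : ℕ) : ℝ) / N)
      Filter.atTop (nhds β) := by
  have hlow : Filter.Tendsto (fun N : ℕ => β - 1 / (N : ℝ)) Filter.atTop (nhds β) := by
    have h2 : Filter.Tendsto (fun N : ℕ => 1 / (N : ℝ)) Filter.atTop (nhds 0) :=
      tendsto_one_div_atTop_nhds_zero_nat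
    simpa using (tendsto_const_nhds :
      Filter.Tendsto (fun _ : ℕ => β) Filter.atTop (nhds β)).sub h2
  refine tendsto_of_tendsto_of_tendsto_of_le_of_le' hlow tendsto_const_nhds ?_ ?_
  · filter_upwards [Filter.eventually_ge_atTop 1] with N hN
    have hNpos : (0 : ℝ) < N := by exact_mod_cast hN
    rw [sub_le_iff_le_add, ← add_div, le_div_iff₀ hNpos]
    exact (Nat.lt_floor_add_one (β * (N : ℝ))).le
  · filter_upwards [Filter.eventually_ge_atTop 1] with N hN
    have hNpos : (0 : ℝ) < N := by exact_mod_cast hN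
    rw [div_le_iff₀ hNpos]
    exact Nat.floor_le (by positivity)

lemma tendsto_floor_atTop' (β : ℝ) (hβ : 0 < β) :
    Filter.Tendsto (fun N : ℕ => ⌊β * (N : ℝ)⌋₊) Filter.atTop Filter.atTop := by
  apply tendsto_nat_floor_atTop.comp
  exact Filter.Tendsto.const_mul_atTop hβ tendsto_natCast_atTop_atTop

lemma tendsto_sub_div (β : ℝ) (hβ : 0 < β) (t : ℕ) :
    Filter.Tendsto (fun N : ℕ => ((⌊β * (N : ℝ)⌋₊ - t : ℕ) : ℝ) / N)
      Filter.atTop (nhds β) := by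
  have hev : ∀ᶠ N : ℕ in Filter.atTop,
      ((⌊β * (N : ℝ)⌋₊ : ℕ) : ℝ) / N - (t : ℝ) / N
        = ((⌊β * (N : ℝ)⌋₊ - t : ℕ) : ℝ) / N := by
    filter_upwards [(tendsto_floor_atTop' β hβ).eventually_ge_atTop t] with N hN
    rw [← sub_div, ← Nat.cast_sub hN]
  have h2 : Filter.Tendsto (fun N : ℕ => (t : ℝ) / N) Filter.atTop (nhds 0) :=
    Filter.Tendsto.div_atTop tendsto_const_nhds tendsto_natCast_atTop_atTop
  have := (tendsto_floor_mul_div β hβ).sub h2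
  rw [sub_zero] at this
  exact this.congr' hev

lemma tendsto_descFactorial_div (β : ℝ) (hβ : 0 < β) (ℓ : ℕ) :
    Filter.Tendsto (fun N : ℕ => ((⌊β * (N : ℝ)⌋₊.descFactorial ℓ : ℕ) : ℝ) / (N : ℝ) ^ ℓ)
      Filter.atTop (nhds (β ^ ℓ)) := by
  have hfun : ∀ N : ℕ, ((⌊β * (N : ℝ)⌋₊.descFactorial ℓ : ℕ) : ℝ) / (N : ℝ) ^ ℓ
      = ∏ t ∈ Finset.range ℓ, ((⌊β * (N : ℝ)⌋₊ - t : ℕ) : ℝ) / N := by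
    intro N
    rw [Nat.descFactorial_eq_prod_range, Nat.cast_prod, Finset.prod_div_distrib,
      Finset.prod_const, Finset.card_range]
  have h := tendsto_finset_prod (Finset.range ℓ)
    (fun t _ => tendsto_sub_div β hβ t)
  rw [Finset.prod_const, Finset.card_range] at h
  exact h.congr fun N => (hfun N).symm


/-- Fix `β > 0` and `L ≥ 1`.  With `K = ⌊βN⌋` i.i.d. uniform draws on
`{1,…,N}` (probabilities computed by uniform counting over all `N^K` outcomes), the `L`-th
empirical spectral moment of the Gram matrix of a TH matrix with `N_s = 1` converges in
probability, as `N → ∞`, to the `L`-th Poisson(β) moment `m̄_L = Σ_{ℓ=1}^L S(L,ℓ) β^ℓ`: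
for every `ε > 0`, `P(|m_L(N) − m̄_L| > ε) → 0`. -/
theorem empirical_spectral_moment_tendsto_poisson_moment
    (β : ℝ) (hβ : 0 < β) (L : ℕ) (hL : 1 ≤ L) (ε : ℝ) (hε : 0 < ε) :
    Filter.Tendsto
      (fun N : ℕ =>
        ((Nat.card {π : Fin ⌊β * (N : ℝ)⌋₊ → Fin N //
            ε < |empMoment L π - ∑ ℓ ∈ Finset.Icc 1 L, (stirling2 L ℓ : ℝ) * β ^ ℓ|} : ℕ) : ℝ) /
          (Fintype.card (Fin ⌊β * (N : ℝ)⌋₊ → Fin N) : ℝ))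
      Filter.atTop (nhds 0) := by
  classical
  set mbar : ℝ := ∑ ℓ ∈ Finset.Icc 1 L, (stirling2 L ℓ : ℝ) * β ^ ℓ with hmbar
  set C : ℝ := ∑ c ∈ Finset.range (2 * L + 1), (stirling2 (2 * L) c : ℝ) * β ^ c with hCdef
  set E1 : ℕ → ℝ := fun N => ∑ ℓ ∈ Finset.range (L + 1),
      (stirling2 L ℓ : ℝ) * ((⌊β * (N : ℝ)⌋₊.descFactorial ℓ : ℕ) : ℝ) / (N : ℝ) ^ ℓ with hE1
  have hmbar_eq : ∑ ℓ ∈ Finset.range (L + 1), (stirling2 L ℓ : ℝ) * β ^ ℓ = mbar := by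
    have hset : Finset.range (L + 1) = insert 0 (Finset.Icc 1 L) := by
      ext x
      simp only [Finset.mem_range, Nat.lt_succ_iff, Finset.mem_insert, Finset.mem_Icc]
      omega
    have hs0 : stirling2 L 0 = 0 := by
      cases L with
      | zero => omega
      | succ n => rfl
    rw [hset, Finset.sum_insert (by simp), hs0, hmbar]
    simp
  have hE1tend : Filter.Tendsto E1 Filter.atTop (nhds mbar) := by
    rw [← hmbar_eq]
    refine tendsto_finset_sum _ fun ℓ _ => ?_
    have h := (tendsto_descFactorial_div β hβ ℓ).const_mul ((stirling2 L ℓ : ℝ))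
    refine h.congr fun N => by rw [mul_div_assoc]
  have hGtend : Filter.Tendsto
      (fun N : ℕ => (C / (N : ℝ) + (E1 N - mbar) ^ 2) / ε ^ 2)
      Filter.atTop (nhds 0) := by
    have h1 : Filter.Tendsto (fun N : ℕ => C / (N : ℝ)) Filter.atTop (nhds 0) :=
      Filter.Tendsto.div_atTop tendsto_const_nhds tendsto_natCast_atTop_atTop
    have h2 : Filter.Tendsto (fun N : ℕ => (E1 N - mbar) ^ 2) Filter.atTop (nhds 0) := by
      have := (hE1tend.sub (tendsto_const_nhds (x := mbar))).pow 2
      simpa using this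
    have := (h1.add h2).div_const (ε ^ 2)
    simpa using this
  refine tendsto_of_tendsto_of_tendsto_of_le_of_le' tendsto_const_nhds hGtend ?_ ?_
  · filter_upwards with N
    positivity
  · filter_upwards [Filter.eventually_ge_atTop 2] with N hN
    have hNpos : (0 : ℝ) < N := by exact_mod_cast Nat.lt_of_lt_of_le Nat.zero_lt_two hN
    have hcard : (Fintype.card (Fin ⌊β * (N : ℝ)⌋₊ → Fin N) : ℝ)
        = (N : ℝ) ^ (⌊β * (N : ℝ)⌋₊) := by
      rw [Fintype.card_fun, Fintype.card_fin, Fintype.card_fin]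
      push_cast
      ring
    rw [hcard, div_le_iff₀ (by positivity)]
    have hK : ((⌊β * (N : ℝ)⌋₊ : ℕ) : ℝ) ≤ β * N := Nat.floor_le (by positivity)
    have hch := cheb_count (N := N) (K := ⌊β * (N : ℝ)⌋₊) L ε mbar hε
    have hbb := sum_sq_dev_bound L (N := N) (K := ⌊β * (N : ℝ)⌋₊) hN β hβ hK mbar
    have hstep : ((Nat.card {π : Fin ⌊β * (N : ℝ)⌋₊ → Fin N //
            ε < |empMoment L π - mbar|} : ℕ) : ℝ)
        ≤ ((N : ℝ) ^ (⌊β * (N : ℝ)⌋₊) * (C / N + (E1 N - mbar) ^ 2)) / ε ^ 2 := by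
      rw [le_div_iff₀ (by positivity)]
      exact hch.trans (hbb.trans_eq rfl)
    refine hstep.trans ?_
    rw [div_mul_eq_mul_div]
    exact le_of_eq (by ring)
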